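/- There is a left action of Γ^n by Lie algebra automorphisms on t_{1,n}^Γ, where the element α_i (the n-tuple with α in the i-th slot and 0 elsewhere) fixes all x_j and y_j, fixes t^β_{kl} whenever i ∉ {k,l}, and sends t^β_{ij} to t^{β+α}_{ij} (and t^β_{ji} to t^{β-α}_{ji}) for j ≠ i. -/

import Mathlib

/-! STATEMENT 0: In the Lie algebra `t_{1,n}^Γ` of infinitesimal ellipsitomic braids
(presented by generators `x_i, y_i, t^α_{ij}` and the relations listed in the paper),
the elements `Σ_i x_i` and `Σ_i y_i` are central. -/

namespace Ellipsitomic3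

/-- Generators of `t_{1,n}^Γ`. -/
inductive Gen (Γ : Type) (n : ℕ) : Type where
  | x : Fin n → Gen Γ n
  | y : Fin n → Gen Γ n
  | t : Γ → (i j : Fin n) → i ≠ j → Gen Γ n

variable (k : Type) [Field k] [CharZero k] (Γ : Type) [AddCommGroup Γ] [Fintype Γ] (n : ℕ)

/-- The generator `x_i` in the free Lie algebra. -/
noncomputable def X (i : Fin n) : FreeLieAlgebra k (Gen Γ n) := FreeLieAlgebra.of k (Gen.x i)

/-- The generator `y_i` in the free Lie algebra. -/
noncomputable def Y (i : Fin n) : FreeLieAlgebra k (Gen Γ n) := FreeLieAlgebra.of k (Gen.y i)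

/-- The generator `t^α_{ij}` (for `i ≠ j`) in the free Lie algebra. -/
noncomputable def T (α : Γ) (i j : Fin n) (h : i ≠ j) : FreeLieAlgebra k (Gen Γ n) :=
  FreeLieAlgebra.of k (Gen.t α i j h)

/-- The defining relations of `t_{1,n}^Γ`. -/
def Rels : Set (FreeLieAlgebra k (Gen Γ n)) :=
  -- (tS_ell 1):  t^α_{ij} = t^{-α}_{ji}
  {r | ∃ (α : Γ) (i j : Fin n) (h : i ≠ j),
      r = T k Γ n α i j h - T k Γ n (-α) j i h.symm} ∪
  -- (tS_ell 2):  [x_i, y_j] = Σ_α t^α_{ij}  (i ≠ j), (and hence also [x_j,y_i])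
  {r | ∃ (i j : Fin n) (h : i ≠ j),
      r = ⁅X k Γ n i, Y k Γ n j⁆ - ∑ α : Γ, T k Γ n α i j h} ∪
  {r | ∃ (i j : Fin n) (h : i ≠ j),
      r = ⁅X k Γ n j, Y k Γ n i⁆ - ∑ α : Γ, T k Γ n α i j h} ∪
  -- (tN_ell):  [x_i, x_j] = [y_i, y_j] = 0
  {r | ∃ i j : Fin n, r = ⁅X k Γ n i, X k Γ n j⁆} ∪
  {r | ∃ i j : Fin n, r = ⁅Y k Γ n i, Y k Γ n j⁆} ∪
  -- (tT_ell):  [x_i, y_i] = -Σ_{j ≠ i} Σ_α t^α_{ij}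
  {r | ∃ i : Fin n, r = ⁅X k Γ n i, Y k Γ n i⁆ +
      ∑ j ∈ Finset.univ.erase i, ∑ α : Γ,
        if h : i = j then 0 else T k Γ n α i j h} ∪
  -- (tL_ell 1):  [t^α_{ij}, t^β_{kl}] = 0  when #{i,j,k,l} = 4
  {r | ∃ (α β : Γ) (i j K l : Fin n) (hij : i ≠ j) (hKl : K ≠ l),
      i ≠ K ∧ i ≠ l ∧ j ≠ K ∧ j ≠ l ∧
      r = ⁅T k Γ n α i j hij, T k Γ n β K l hKl⁆} ∪
  -- (tL_ell 2):  [x_i, t^α_{jK}] = [y_i, t^α_{jK}] = 0  when #{i,j,K} = 3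
  {r | ∃ (α : Γ) (i j K : Fin n) (hjK : j ≠ K),
      i ≠ j ∧ i ≠ K ∧
      (r = ⁅X k Γ n i, T k Γ n α j K hjK⁆ ∨ r = ⁅Y k Γ n i, T k Γ n α j K hjK⁆)} ∪
  -- (t4T_ell 1):  [t^α_{ij}, t^{α+β}_{iK} + t^β_{jK}] = 0  when #{i,j,K} = 3
  {r | ∃ (α β : Γ) (i j K : Fin n) (hij : i ≠ j) (hiK : i ≠ K) (hjK : j ≠ K),
      r = ⁅T k Γ n α i j hij, T k Γ n (α + β) i K hiK + T k Γ n β j K hjK⁆} ∪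
  -- (t4T_ell 2):  [x_i + x_j, t^α_{ij}] = [y_i + y_j, t^α_{ij}] = 0
  {r | ∃ (α : Γ) (i j : Fin n) (h : i ≠ j),
      r = ⁅X k Γ n i + X k Γ n j, T k Γ n α i j h⁆ ∨
      r = ⁅Y k Γ n i + Y k Γ n j, T k Γ n α i j h⁆}

/-- The Lie ideal generated by the relations. -/
noncomputable def relIdeal : LieIdeal k (FreeLieAlgebra k (Gen Γ n)) :=
  LieSubmodule.lieSpan k (FreeLieAlgebra k (Gen Γ n)) (Rels k Γ n)

/-- The Lie algebra `t_{1,n}^Γ` of infinitesimal ellipsitomic braids. -/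
abbrev t1n := FreeLieAlgebra k (Gen Γ n) ⧸ relIdeal k Γ n

/-- The projection onto `t_{1,n}^Γ`. -/
noncomputable def mk : FreeLieAlgebra k (Gen Γ n) → t1n k Γ n :=
  LieSubmodule.Quotient.mk (N := relIdeal k Γ n)

/-- The endomorphism of the free Lie algebra induced by `g : Γ^n`. -/
noncomputable def phi (g : Fin n → Γ) :
    FreeLieAlgebra k (Gen Γ n) →ₗ⁅k⁆ FreeLieAlgebra k (Gen Γ n) :=
  FreeLieAlgebra.lift k fun a => match a with
    | .x i => X k Γ n i
    | .y i => Y k Γ n i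
    | .t β i j h => T k Γ n (β + g i - g j) i j h

@[simp] theorem phi_X (g : Fin n → Γ) (i : Fin n) :
    phi k Γ n g (X k Γ n i) = X k Γ n i :=
  FreeLieAlgebra.lift_of_apply _ _

@[simp] theorem phi_Y (g : Fin n → Γ) (i : Fin n) :
    phi k Γ n g (Y k Γ n i) = Y k Γ n i :=
  FreeLieAlgebra.lift_of_apply _ _

@[simp] theorem phi_T (g : Fin n → Γ) (β : Γ) (i j : Fin n) (h : i ≠ j) :
    phi k Γ n g (T k Γ n β i j h) = T k Γ n (β + g i - g j) i j h :=
  FreeLieAlgebra.lift_of_apply _ _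

theorem phi_sum {ι : Type} (g : Fin n → Γ) (s : Finset ι) (f : ι → FreeLieAlgebra k (Gen Γ n)) :
    phi k Γ n g (∑ i ∈ s, f i) = ∑ i ∈ s, phi k Γ n g (f i) := by
  classical
  induction s using Finset.induction with
  | empty => simpa using LieHom.map_zero (phi k Γ n g)
  | insert _ _ h ih => rw [Finset.sum_insert h, Finset.sum_insert h, map_add, ih]

theorem phi_sumT (g : Fin n → Γ) (i j : Fin n) (h : i ≠ j) :
    phi k Γ n g (∑ α : Γ, T k Γ n α i j h) = ∑ α : Γ, T k Γ n α i j h := by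
  rw [phi_sum]
  simp only [phi_T]
  exact Fintype.sum_equiv (Equiv.addRight (g i - g j)) _ _ (fun α => by rw [add_sub_assoc]; rfl)

theorem phi_rels (g : Fin n → Γ) : ∀ r ∈ Rels k Γ n, phi k Γ n g r ∈ Rels k Γ n := by
  rintro r hr
  simp only [Rels, Set.mem_union, Set.mem_setOf_eq] at hr ⊢
  rcases hr with ((((((((⟨α, i, j, h, rfl⟩ | ⟨i, j, h, rfl⟩) | ⟨i, j, h, rfl⟩) |
      ⟨i, j, rfl⟩) | ⟨i, j, rfl⟩) | ⟨i, rfl⟩) |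
      ⟨α, β, i, j, K, l, hij, hKl, h1, h2, h3, h4, rfl⟩) |
      ⟨α, i, j, K, hjK, h1, h2, hr⟩) |
      ⟨α, β, i, j, K, hij, hiK, hjK, rfl⟩) | ⟨α, i, j, h, hr⟩
  · refine Or.inl <| Or.inl <| Or.inl <| Or.inl <| Or.inl <| Or.inl <| Or.inl <| Or.inl <|
      Or.inl ⟨α + g i - g j, i, j, h, ?_⟩
    have e : -α + g j - g i = -(α + g i - g j) := by abel
    rw [map_sub, phi_T, phi_T, e]
  · refine Or.inl <| Or.inl <| Or.inl <| Or.inl <| Or.inl <| Or.inl <| Or.inl <| Or.inl <|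
      Or.inr ⟨i, j, h, ?_⟩
    rw [map_sub, LieHom.map_lie, phi_X, phi_Y, phi_sumT]
  · refine Or.inl <| Or.inl <| Or.inl <| Or.inl <| Or.inl <| Or.inl <| Or.inl <| Or.inr
      ⟨i, j, h, ?_⟩
    rw [map_sub, LieHom.map_lie, phi_X, phi_Y, phi_sumT]
  · exact Or.inl <| Or.inl <| Or.inl <| Or.inl <| Or.inl <| Or.inl <| Or.inr
      ⟨i, j, by simp only [LieHom.map_lie, phi_X]⟩
  · exact Or.inl <| Or.inl <| Or.inl <| Or.inl <| Or.inl <| Or.inr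
      ⟨i, j, by simp only [LieHom.map_lie, phi_Y]⟩
  · refine Or.inl <| Or.inl <| Or.inl <| Or.inl <| Or.inr ⟨i, ?_⟩
    rw [map_add, LieHom.map_lie, phi_X, phi_Y, phi_sum]
    congr 1
    refine Finset.sum_congr rfl fun j hj => ?_
    have h : i ≠ j := (Finset.mem_erase.mp hj).1.symm
    simp only [dif_neg h]
    exact phi_sumT k Γ n g i j h
  · refine Or.inl <| Or.inl <| Or.inl <| Or.inr
      ⟨α + g i - g j, β + g K - g l, i, j, K, l, hij, hKl, h1, h2, h3, h4, ?_⟩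
    rw [LieHom.map_lie, phi_T, phi_T]
  · refine Or.inl <| Or.inl <| Or.inr ⟨α + g j - g K, i, j, K, hjK, h1, h2, ?_⟩
    rcases hr with rfl | rfl
    · exact Or.inl (by rw [LieHom.map_lie, phi_X, phi_T])
    · exact Or.inr (by rw [LieHom.map_lie, phi_Y, phi_T])
  · refine Or.inl <| Or.inr
      ⟨α + g i - g j, β + g j - g K, i, j, K, hij, hiK, hjK, ?_⟩
    have e : α + β + g i - g K = α + g i - g j + (β + g j - g K) := by abel
    rw [LieHom.map_lie, map_add, phi_T, phi_T, phi_T, e]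
  · refine Or.inr ⟨α + g i - g j, i, j, h, ?_⟩
    rcases hr with rfl | rfl
    · exact Or.inl (by rw [LieHom.map_lie, map_add, phi_X, phi_X, phi_T])
    · exact Or.inr (by rw [LieHom.map_lie, map_add, phi_Y, phi_Y, phi_T])

theorem phi_mem_relIdeal (g : Fin n → Γ) {x : FreeLieAlgebra k (Gen Γ n)}
    (hx : x ∈ relIdeal k Γ n) : phi k Γ n g x ∈ relIdeal k Γ n := by
  have hle : relIdeal k Γ n ≤ LieIdeal.comap (phi k Γ n g) (relIdeal k Γ n) := by
    rw [relIdeal, LieSubmodule.lieSpan_le]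
    intro r hr
    rw [SetLike.mem_coe, LieIdeal.mem_comap]
    exact LieSubmodule.subset_lieSpan (phi_rels k Γ n g r hr)
  exact (LieIdeal.mem_comap).mp (hle hx)

/-- The induced linear endomorphism of the quotient. -/
noncomputable def actLin (g : Fin n → Γ) : t1n k Γ n →ₗ[k] t1n k Γ n :=
  Submodule.mapQ (relIdeal k Γ n : Submodule k (FreeLieAlgebra k (Gen Γ n)))
    (relIdeal k Γ n : Submodule k (FreeLieAlgebra k (Gen Γ n)))
    (phi k Γ n g).toLinearMap (fun _ hx => phi_mem_relIdeal k Γ n g hx)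

theorem actLin_mk (g : Fin n → Γ) (x : FreeLieAlgebra k (Gen Γ n)) :
    actLin k Γ n g (mk k Γ n x) = mk k Γ n (phi k Γ n g x) :=
  Submodule.mapQ_apply _ _ _ x

theorem mk_surj : Function.Surjective (mk k Γ n) :=
  fun x => Quotient.inductionOn' x fun a => ⟨a, rfl⟩

/-- The induced Lie algebra endomorphism of the quotient. -/
noncomputable def act (g : Fin n → Γ) : t1n k Γ n →ₗ⁅k⁆ t1n k Γ n :=
  { actLin k Γ n g with
    map_lie' := by
      intro x y
      obtain ⟨a, rfl⟩ := mk_surj k Γ n x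
      obtain ⟨b, rfl⟩ := mk_surj k Γ n y
      have hab : (⁅mk k Γ n a, mk k Γ n b⁆ : t1n k Γ n) = mk k Γ n ⁅a, b⁆ :=
        (LieSubmodule.Quotient.mk_bracket (relIdeal k Γ n) a b).symm
      simp only [LinearMap.toFun_eq_coe, hab, actLin_mk, LieHom.map_lie]
      exact (LieSubmodule.Quotient.mk_bracket (relIdeal k Γ n) _ _) }

theorem act_mk (g : Fin n → Γ) (x : FreeLieAlgebra k (Gen Γ n)) :
    act k Γ n g (mk k Γ n x) = mk k Γ n (phi k Γ n g x) :=
  actLin_mk k Γ n g x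

/-- There is a left action of `Γ^n` by Lie algebra automorphisms on
`t_{1,n}^Γ`, where `g = (g_1,…,g_n) ∈ Γ^n` fixes all `x_i` and `y_i` and sends
`t^β_{kl}` to `t^{β + g_k - g_l}_{kl}`; in particular `α_i` (with `α` in the `i`-th
slot and `0` elsewhere) fixes `t^β_{kl}` whenever `i ∉ {k,l}`, sends `t^β_{ij}` to
`t^{β+α}_{ij}` and `t^β_{ji}` to `t^{β-α}_{ji}`.  The action property
`act (g+g') = act g ∘ act g'` and `act 0 = id` makes each `act g` an automorphism. -/
theorem gamma_n_action_by_automorphisms :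
    ∃ act : (Fin n → Γ) → (t1n k Γ n →ₗ⁅k⁆ t1n k Γ n),
      act 0 = LieHom.id ∧
      (∀ g g' : Fin n → Γ, act (g + g') = (act g).comp (act g')) ∧
      (∀ (g : Fin n → Γ) (i : Fin n), act g (mk k Γ n (X k Γ n i)) = mk k Γ n (X k Γ n i)) ∧
      (∀ (g : Fin n → Γ) (i : Fin n), act g (mk k Γ n (Y k Γ n i)) = mk k Γ n (Y k Γ n i)) ∧
      (∀ (g : Fin n → Γ) (β : Γ) (i j : Fin n) (h : i ≠ j),
        act g (mk k Γ n (T k Γ n β i j h)) =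
          mk k Γ n (T k Γ n (β + g i - g j) i j h)) := by
  refine ⟨act k Γ n, ?_, ?_, ?_, ?_, ?_⟩
  · apply LieHom.ext
    intro x
    obtain ⟨a, rfl⟩ := mk_surj k Γ n x
    rw [act_mk]
    have : phi k Γ n 0 = LieHom.id := by
      apply FreeLieAlgebra.hom_ext
      intro a
      cases a with
      | x i => exact phi_X k Γ n 0 i
      | y i => exact phi_Y k Γ n 0 i
      | t β i j h =>
        show phi k Γ n 0 (T k Γ n β i j h) = T k Γ n β i j h
        rw [phi_T]
        congr 1
        simp
    rw [this]; rfl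
  · intro g g'
    apply LieHom.ext
    intro x
    obtain ⟨a, rfl⟩ := mk_surj k Γ n x
    rw [LieHom.comp_apply, act_mk, act_mk, act_mk]
    congr 1
    have : phi k Γ n (g + g') = (phi k Γ n g).comp (phi k Γ n g') := by
      apply FreeLieAlgebra.hom_ext
      intro a
      cases a with
      | x i =>
        show phi k Γ n (g + g') (X k Γ n i) = (phi k Γ n g).comp (phi k Γ n g') (X k Γ n i)
        rw [LieHom.comp_apply, phi_X, phi_X, phi_X]
      | y i =>
        show phi k Γ n (g + g') (Y k Γ n i) = (phi k Γ n g).comp (phi k Γ n g') (Y k Γ n i)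
        rw [LieHom.comp_apply, phi_Y, phi_Y, phi_Y]
      | t β i j h =>
        show phi k Γ n (g + g') (T k Γ n β i j h) =
          (phi k Γ n g).comp (phi k Γ n g') (T k Γ n β i j h)
        rw [LieHom.comp_apply, phi_T, phi_T, phi_T]
        congr 1
        simp only [Pi.add_apply]
        abel
    rw [this]; rfl
  · intro g i; rw [act_mk, phi_X]
  · intro g i; rw [act_mk, phi_Y]
  · intro g β i j h; rw [act_mk, phi_T]

end Ellipsitomic3
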